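/- Consider the non-Euclidean composite gradient iteration. Then for every i ≥ 0: (a) φ(z_{i+1}) ≤ φ(z_i) − L·β_ρ(z_i, z_{i+1}); (b) for every z ∈ s, β_ρ(z_{i+1}, z) ≤ (1 − κ/2)·β_ρ(z_i, z) + (1/(2L))·(φ(z) − φ(z_{i+1})); and (c) if z* is a minimizer of φ over s, then β_ρ(z_{i+1}, z*) ≤ (1 − κ/2)^{i+1}·β_ρ(z_0, z*) + (1/(2L))·(φ(z*) − φ(z_{i+1})). -/

import Mathlib

open scoped RealInnerProductSpace
open Filter Set Topology

lemma dirDeriv_tendsto {E : Type*} [NormedAddCommGroup E] [InnerProductSpace ℝ E] [CompleteSpace E]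
    {g : E → ℝ} {g' : E} {a : E} (hg : HasGradientAt g g' a) (v : E) :
    Tendsto (fun t : ℝ => (g (a + t • v) - g a) / t) (𝓝[>] (0:ℝ)) (𝓝 ⟪g', v⟫) := by
  have hline : HasDerivAt (fun t : ℝ => a + t • v) v 0 := by
    simpa using ((hasDerivAt_id (0:ℝ)).smul_const v).const_add a
  have hq : HasDerivAt (fun t : ℝ => g (a + t • v)) ⟪g', v⟫ 0 := by
    have h2 : HasFDerivAt g ((InnerProductSpace.toDual ℝ E) g') ((fun t : ℝ => a + t • v) 0) := by
      simpa using hg.hasFDerivAt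
    have h3 := h2.comp_hasDerivAt 0 hline
    simp only [InnerProductSpace.toDual_apply_apply] at h3
    exact h3
  have h1 := (hasDerivAt_iff_tendsto_slope.mp hq).mono_left
    (nhdsWithin_mono _ fun x hx => ne_of_gt hx)
  refine h1.congr fun t => ?_
  simp [slope_def_field]

lemma ge_inner_of_slope {E : Type*} [NormedAddCommGroup E] [InnerProductSpace ℝ E] [CompleteSpace E]
    {g : E → ℝ} {g' : E} {a : E} (hg : HasGradientAt g g' a) (v : E) {c : ℝ}
    (hc : ∀ t : ℝ, t ∈ Set.Ioc (0:ℝ) 1 → c ≤ (g (a + t • v) - g a) / t) : c ≤ ⟪g', v⟫ :=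
  ge_of_tendsto (dirDeriv_tendsto hg v)
    (Filter.eventually_of_mem (Ioc_mem_nhdsGT (by norm_num : (0:ℝ) < 1)) hc)

lemma le_inner_of_slope {E : Type*} [NormedAddCommGroup E] [InnerProductSpace ℝ E] [CompleteSpace E]
    {g : E → ℝ} {g' : E} {a : E} (hg : HasGradientAt g g' a) (v : E) {c : ℝ}
    (hc : ∀ t : ℝ, t ∈ Set.Ioc (0:ℝ) 1 → (g (a + t • v) - g a) / t ≤ c) : ⟪g', v⟫ ≤ c :=
  le_of_tendsto (dirDeriv_tendsto hg v)
    (Filter.eventually_of_mem (Ioc_mem_nhdsGT (by norm_num : (0:ℝ) < 1)) hc)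

lemma tangent_le {E : Type*} [NormedAddCommGroup E] [InnerProductSpace ℝ E] [CompleteSpace E]
    {g : E → ℝ} {g' : E → E} (hg : ∀ x, HasGradientAt g (g' x) x)
    (hconv : ConvexOn ℝ Set.univ g) (a w : E) : g a + ⟪g' a, w - a⟫ ≤ g w := by
  have key : ⟪g' a, w - a⟫ ≤ g w - g a := by
    apply le_inner_of_slope (hg a) (w - a)
    intro t ht
    have h2 := hconv.2 (Set.mem_univ a) (Set.mem_univ w)
      (by linarith [ht.2] : (0:ℝ) ≤ 1 - t) (le_of_lt ht.1) (by ring)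
    have heq : (1 - t) • a + t • w = a + t • (w - a) := by module
    rw [heq] at h2
    rw [div_le_iff₀ ht.1]
    simp only [smul_eq_mul] at h2
    nlinarith [h2]
  linarith

theorem stmt10 {E : Type*} [NormedAddCommGroup E] [InnerProductSpace ℝ E]
    [FiniteDimensional ℝ E]
    (s : Set E) (hs : s.Nonempty) (hsconv : Convex ℝ s)
    (ψ : E → ℝ) (hψ : ConvexOn ℝ s ψ)
    (f : E → ℝ) (f' : E → E) (hf' : ∀ x, HasGradientAt f (f' x) x)
    (hfconv : ConvexOn ℝ Set.univ f)
    (p : ℕ) (hp : 1 ≤ p)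
    (y : E) (hy : y ∈ s) (H : ℝ) (hH : 0 < H)
    (h : E → ℝ) (hhdef : ∀ z, h z = f z + H * (‖z - y‖ ^ (p + 1) / (p + 1)))
    (h' : E → E) (hh' : ∀ x, HasGradientAt h (h' x) x)
    (φ : E → ℝ) (hφ : ∀ z, φ z = h z + ψ z)
    (ρ : E → ℝ) (ρ' : E → E) (hρ' : ∀ x, HasGradientAt ρ (ρ' x) x)
    (hρconv : ConvexOn ℝ Set.univ ρ)
    (Br : E → E → ℝ) (hBr : ∀ x w, Br x w = ρ w - ρ x - ⟪ρ' x, w - x⟫)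
    (L μ : ℝ) (hμ : 0 < μ) (hμL : μ ≤ L)
    (hrel : ∀ x w, μ * Br x w ≤ h w - h x - ⟪h' x, w - x⟫ ∧
        h w - h x - ⟪h' x, w - x⟫ ≤ L * Br x w)
    (z : ℕ → E) (hz0 : z 0 = y)
    (hzs : ∀ i, z (i + 1) ∈ s)
    (hzmin : ∀ i : ℕ, ∀ w ∈ s,
        ⟪h' (z i), z (i + 1) - z i⟫ + ψ (z (i + 1)) + 2 * L * Br (z i) (z (i + 1))
          ≤ ⟪h' (z i), w - z i⟫ + ψ w + 2 * L * Br (z i) w)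
    :
    (∀ i : ℕ, φ (z (i + 1)) ≤ φ (z i) - L * Br (z i) (z (i + 1))) ∧
    (∀ i : ℕ, ∀ w ∈ s, Br (z (i + 1)) w ≤ (1 - μ / L / 2) * Br (z i) w
        + 1 / (2 * L) * (φ w - φ (z (i + 1)))) ∧
    (∀ zstar ∈ s, (∀ w ∈ s, φ zstar ≤ φ w) →
        ∀ i : ℕ, Br (z (i + 1)) zstar ≤ (1 - μ / L / 2) ^ (i + 1) * Br (z 0) zstar
            + 1 / (2 * L) * (φ zstar - φ (z (i + 1)))) := by
  have hL : 0 < L := lt_of_lt_of_le hμ hμL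
  have h2L : (0:ℝ) < 2 * L := by linarith
  have hsz : ∀ i : ℕ, z i ∈ s := by
    intro i
    cases i with
    | zero => rw [hz0]; exact hy
    | succ n => exact hzs n
  have hBrxx : ∀ x, Br x x = 0 := by intro x; simp [hBr]
  have hBrnn : ∀ x w, 0 ≤ Br x w := by
    intro x w
    rw [hBr]
    have := tangent_le hρ' hρconv x w
    linarith
  -- first-order optimality of z (i+1)
  have hkey : ∀ i : ℕ, ∀ w ∈ s,
      0 ≤ ⟪h' (z i), w - z (i+1)⟫ + ψ w - ψ (z (i+1))
        + 2*L*(⟪ρ' (z (i+1)), w - z (i+1)⟫ - ⟪ρ' (z i), w - z (i+1)⟫) := by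
    intro i w hw
    have has : z (i+1) ∈ s := hzs i
    have hdir : ⟪ρ' (z i), w - z (i+1)⟫
        - (⟪h' (z i), w - z (i+1)⟫ + ψ w - ψ (z (i+1))) / (2*L)
        ≤ ⟪ρ' (z (i+1)), w - z (i+1)⟫ := by
      apply ge_inner_of_slope (hρ' (z (i+1))) (w - z (i+1))
      intro t ht
      have hts : z (i+1) + t • (w - z (i+1)) ∈ s := by
        have hm := hsconv has hw (by linarith [ht.2] : (0:ℝ) ≤ 1 - t) (le_of_lt ht.1) (by ring)
        have heq : (1 - t) • z (i+1) + t • w = z (i+1) + t • (w - z (i+1)) := by module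
        rwa [heq] at hm
      have hmin := hzmin i (z (i+1) + t • (w - z (i+1))) hts
      rw [hBr, hBr] at hmin
      have hψc : ψ (z (i+1) + t • (w - z (i+1))) ≤ (1-t) * ψ (z (i+1)) + t * ψ w := by
        have hm := hψ.2 has hw (by linarith [ht.2] : (0:ℝ) ≤ 1 - t) (le_of_lt ht.1) (by ring)
        have heq : (1 - t) • z (i+1) + t • w = z (i+1) + t • (w - z (i+1)) := by module
        rw [heq] at hm
        simpa using hm
      have e1 : ⟪h' (z i), (z (i+1) + t • (w - z (i+1))) - z i⟫
          = ⟪h' (z i), z (i+1) - z i⟫ + t * ⟪h' (z i), w - z (i+1)⟫ := by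
        rw [show (z (i+1) + t • (w - z (i+1))) - z i = (z (i+1) - z i) + t • (w - z (i+1)) from by
          module, inner_add_right, real_inner_smul_right]
      have e2 : ⟪ρ' (z i), (z (i+1) + t • (w - z (i+1))) - z i⟫
          = ⟪ρ' (z i), z (i+1) - z i⟫ + t * ⟪ρ' (z i), w - z (i+1)⟫ := by
        rw [show (z (i+1) + t • (w - z (i+1))) - z i = (z (i+1) - z i) + t • (w - z (i+1)) from by
          module, inner_add_right, real_inner_smul_right]
      rw [e1, e2] at hmin
      rw [le_div_iff₀ ht.1]
      have hcant : (⟪h' (z i), w - z (i+1)⟫ + ψ w - ψ (z (i+1))) / (2*L) * t * (2*L)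
          = (⟪h' (z i), w - z (i+1)⟫ + ψ w - ψ (z (i+1))) * t := by
        field_simp
      have hstep : (⟪ρ' (z i), w - z (i+1)⟫
          - (⟪h' (z i), w - z (i+1)⟫ + ψ w - ψ (z (i+1))) / (2*L)) * t * (2*L)
          ≤ (ρ (z (i+1) + t • (w - z (i+1))) - ρ (z (i+1))) * (2*L) := by
        nlinarith [hmin, hψc, hcant]
      exact le_of_mul_le_mul_right hstep h2L
    have hcan : 2*L*((⟪h' (z i), w - z (i+1)⟫ + ψ w - ψ (z (i+1))) / (2*L))
        = ⟪h' (z i), w - z (i+1)⟫ + ψ w - ψ (z (i+1)) := by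
      field_simp
    have h1 := mul_le_mul_of_nonneg_left hdir (by linarith : (0:ℝ) ≤ 2*L)
    nlinarith [h1, hcan]
  -- part (a)
  have parta : ∀ i : ℕ, φ (z (i + 1)) ≤ φ (z i) - L * Br (z i) (z (i + 1)) := by
    intro i
    have hu := (hrel (z i) (z (i+1))).2
    have hmin := hzmin i (z i) (hsz i)
    rw [hBrxx] at hmin
    have hin : ⟪h' (z i), z i - z i⟫ = 0 := by simp
    rw [hφ, hφ]
    linarith [hmin, hu]
  -- part (b)
  have partb : ∀ i : ℕ, ∀ w ∈ s, Br (z (i + 1)) w ≤ (1 - μ / L / 2) * Br (z i) w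
      + 1 / (2 * L) * (φ w - φ (z (i + 1))) := by
    intro i w hw
    have hu := (hrel (z i) (z (i+1))).2
    have hlow := (hrel (z i) w).1
    have hk := hkey i w hw
    have h3 : 2*L*(⟪ρ' (z (i+1)), w - z (i+1)⟫ - ⟪ρ' (z i), w - z (i+1)⟫)
        = 2*L*(Br (z i) w - Br (z i) (z (i+1)) - Br (z (i+1)) w) := by
      rw [hBr, hBr, hBr]
      simp only [inner_sub_right]
      ring
    have hiw : ⟪h' (z i), w - z (i+1)⟫ = ⟪h' (z i), w - z i⟫ - ⟪h' (z i), z (i+1) - z i⟫ := by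
      rw [← inner_sub_right]
      congr 1
      abel
    have hba : 0 ≤ L * Br (z i) (z (i+1)) := mul_nonneg hL.le (hBrnn _ _)
    have hmain : 2*L*Br (z (i+1)) w ≤ (2*L - μ)*Br (z i) w + (φ w - φ (z (i+1))) := by
      rw [hφ, hφ]
      linarith [hu, hlow, hk, h3, hba]
    have heq : (1 - μ / L / 2) * Br (z i) w + 1 / (2 * L) * (φ w - φ (z (i + 1)))
        = ((2*L - μ)*Br (z i) w + (φ w - φ (z (i+1))))/(2*L) := by
      field_simp
    rw [heq, le_div_iff₀ h2L]
    linarith [hmain]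
  refine ⟨parta, partb, ?_⟩
  intro zs hzsmem hminφ i
  induction i with
  | zero => simpa using partb 0 zs hzsmem
  | succ n ih =>
    have hb := partb (n+1) zs hzsmem
    have hφle : φ zs ≤ φ (z (n+1)) := hminφ _ (hzs n)
    have hr0 : 0 ≤ 1 - μ / L / 2 := by
      have hd : μ / L ≤ 1 := (div_le_one hL).mpr hμL
      linarith
    have h1 : (1 - μ / L / 2) * (1 / (2 * L) * (φ zs - φ (z (n+1)))) ≤ 0 :=
      mul_nonpos_of_nonneg_of_nonpos hr0
        (mul_nonpos_of_nonneg_of_nonpos (by positivity) (by linarith))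
    have h2 := mul_le_mul_of_nonneg_left ih hr0
    rw [pow_succ]
    nlinarith [hb, h2, h1]
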